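/- arXiv:1907.08251 — 4 statements merged into one kernel-verified Lean document; each statement's English description precedes it below -/
import Mathlib

section
/- Let τ ∈ prefixes(S) \ S be a valid non-maximal prefix trace and P ⊆ S a maximal trace property. If for every event e such that τ++[e] ∈ prefixes(S) we have τ++[e] ∈ α(P), then τ ∈ α(P). (One-step backward closure of prediction trace properties.) -/
variable {E : Type*}

def prefixes (P : Set (List E)) : Set (List E) := {σ | ∃ τ ∈ P, σ <+: τ}

def predAbs (S P : Set (List E)) : Set (List E) :=
  {σ | σ ∈ prefixes P ∧ ∀ σ' ∈ S, σ <+: σ' → σ' ∈ P}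

def gammaConc (S Q : Set (List E)) : Set (List E) := Q ∩ S

def inquiry (S : Set (List E)) (L : Set (Set (List E))) (σ : List E) : Set (List E) :=
  ⋂₀ {P | P ∈ L ∧ σ ∈ predAbs S P}

theorem predAbs_backward_closure (S P : Set (List E)) (hP : P ⊆ S)
    (τ : List E) (hτ : τ ∈ prefixes S) (hτm : τ ∉ S)
    (h : ∀ e : E, τ ++ [e] ∈ prefixes S → τ ++ [e] ∈ predAbs S P) :
    τ ∈ predAbs S P := by
  have step : ∀ σ' ∈ S, τ <+: σ' → ∃ e, τ ++ [e] <+: σ' := by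
    intro σ' hσ' hpre
    obtain ⟨t, rfl⟩ := hpre
    cases t with
    | nil => exact absurd (by simpa using hσ') hτm
    | cons e rest => exact ⟨e, rest, by simp⟩
  constructor
  · obtain ⟨σ', hσ', hpre⟩ := hτ
    obtain ⟨e, he⟩ := step σ' hσ' hpre
    obtain ⟨⟨ρ, hρ, hρp⟩, -⟩ := h e ⟨σ', hσ', he⟩
    exact ⟨ρ, hρ, ((List.prefix_append τ [e]).trans hρp)⟩
  · intro σ' hσ' hpre
    obtain ⟨e, he⟩ := step σ' hσ' hpre
    exact (h e ⟨σ', hσ', he⟩).2 σ' hσ' he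
end

section
/- For a valid non-maximal trace σ ∈ prefixes(S) \ S, the set {P ∈ L | σ ∈ α(P)} equals the intersection over all events e with σ++[e] ∈ prefixes(S) of the sets {P ∈ L | σ++[e] ∈ α(P)}: i.e., σ ∈ α(P) if and only if for every event e with σ++[e] ∈ prefixes(S), σ++[e] ∈ α(P). -/
variable {E : Type*}

lemma step_of_proper_prefix {σ τ : List E} (h : σ <+: τ) (hne : σ ≠ τ) :
    ∃ e : E, σ ++ [e] <+: τ := by
  obtain ⟨t, rfl⟩ := h
  cases t with
  | nil => simp at hne
  | cons e t => exact ⟨e, t, by simp⟩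

theorem predAbs_one_step_iff (S P : Set (List E)) (L : Set (Set (List E)))
    (hP : P ⊆ S) (hPL : P ∈ L) (σ : List E)
    (hσ : σ ∈ prefixes S) (hσm : σ ∉ S) :
    σ ∈ predAbs S P ↔
      ∀ e : E, σ ++ [e] ∈ prefixes S → σ ++ [e] ∈ predAbs S P := by
  constructor
  · rintro ⟨hpre, hcl⟩ e ⟨τ, hτS, hτp⟩
    have hτσ : σ <+: τ := (List.prefix_append σ [e]).trans hτp
    have hτP : τ ∈ P := hcl τ hτS hτσ
    refine ⟨⟨τ, hτP, hτp⟩, ?_⟩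
    intro σ' hσ' hp
    exact hcl σ' hσ' ((List.prefix_append σ [e]).trans hp)
  · intro h
    have key : ∀ τ ∈ S, σ <+: τ → τ ∈ P := by
      intro τ hτS hτp
      have hne : σ ≠ τ := fun heq => hσm (heq ▸ hτS)
      obtain ⟨e, he⟩ := step_of_proper_prefix hτp hne
      exact (h e ⟨τ, hτS, he⟩).2 τ hτS he
    obtain ⟨τ, hτS, hτp⟩ := hσ
    exact ⟨⟨τ, key τ hτS hτp, hτp⟩, key⟩
end

section
/- Suppose the observation O(σ) of a trace σ satisfies O(σ) ⊆ B for a behavior B ⊆ S, where O(σ) = ⋃_{σ' ∈ ω(σ)} I(σ'), ω is extensive, each nonempty I(σ') is guaranteed by σ' in the sense that every maximal trace extending σ' lies in I(σ'), and σ ∈ prefixes(S). Then every maximal trace σ'' ∈ S with σ ⪯ σ'' satisfies σ'' ∈ B. -/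
variable {E : Type*}

theorem observation_guarantee (S : Set (List E)) (L : Set (Set (List E)))
    (hL : ∀ P ∈ L, P ⊆ S) (ω : List E → Set (List E))
    (hext : ∀ σ : List E, σ ∈ ω σ)
    (hguar : ∀ σ' : List E, (inquiry S L σ').Nonempty →
      ∀ σ'' ∈ S, σ' <+: σ'' → σ'' ∈ inquiry S L σ')
    (B : Set (List E)) (hB : B ⊆ S) (σ : List E) (hσ : σ ∈ prefixes S)
    (hO : (⋃ σ' ∈ ω σ, inquiry S L σ') ⊆ B) :
    ∀ σ'' ∈ S, σ <+: σ'' → σ'' ∈ B := by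
  intro σ'' hS hpre
  apply hO
  refine Set.mem_biUnion (hext σ) ?_
  intro P hP
  exact hP.2.2 σ'' hS hpre
end

section
/- If an event R is determined by its history, i.e., for all events e, e' such that H·[e] ∈ prefixes(S) and H·[e'] ∈ prefixes(S) we have e = e', then R cannot be responsible for any behavior B with respect to an observation O satisfying the one-step decomposition O(H) = ⋃{O(H·[e]) | H·[e] ∈ prefixes(S)}: there is no behavior B with ∅ ⊊ O(H·R) ⊆ B ⊊ O(H) for H·R ∈ prefixes(S). -/
variable {E : Type*}

theorem determined_not_responsible (S : Set (List E))
    (O : List E → Set (List E)) (H : List E) (e₀ : E)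
    (hH : H ∈ prefixes S) (hHm : H ∉ S)
    (hR : H ++ [e₀] ∈ prefixes S)
    (hdet : ∀ e e' : E, H ++ [e] ∈ prefixes S → H ++ [e'] ∈ prefixes S → e = e')
    (hdec : O H = ⋃ e ∈ {e : E | H ++ [e] ∈ prefixes S}, O (H ++ [e])) :
    ¬ ∃ B : Set (List E), B ⊆ S ∧ (O (H ++ [e₀])).Nonempty ∧
        O (H ++ [e₀]) ⊆ B ∧ B ⊂ O H := by
  rintro ⟨B, hBS, hne, hOB, hBO⟩
  have hOHeq : O H = O (H ++ [e₀]) := by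
    rw [hdec]
    ext x
    simp only [Set.mem_iUnion, Set.mem_setOf_eq]
    constructor
    · rintro ⟨e, he, hx⟩
      rwa [hdet e e₀ he hR] at hx
    · exact fun hx => ⟨e₀, hR, hx⟩
  exact hBO.2 (hOHeq ▸ hOB)
end
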